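/- There exist constants C > 0 and δ ∈ (0,1) (δ as in the exponential-decay lemma for Walsh products) such that the following holds. Let t², s be natural numbers with t² < s, fix binary digits k_0,…,k_{t²} ∈ {0,1}, and for x = (x¹,x²) ∈ [0,1)² set F_{t²,s}(x) = sup_{n < 2^s} |Σ_{k_{t²+1},…,k_{s−1} ∈ {0,1}} ω_{k^{(t²+1)}}(x¹) ω_{(n+k)^{(t²+1)}}(x²)|, where k = Σ_{j=0}^{s−1} k_j 2^j. Then for every two-dimensional dyadic square I_{t²+1}(u¹) × I_{t²+1}(u²) one has 2^{2t²} ∫_{I_{t²+1}(u¹)×I_{t²+1}(u²)} F_{t²,s}(x) dx ≤ C 2^{s−t²} δ^{s−t²}. -/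

import Mathlib

open MeasureTheory

/-- The `j`-th binary digit of `x ∈ [0,1)`, using the expansion terminating in zeros. -/
noncomputable def dig (x : ℝ) (j : ℕ) : ℕ := (⌊x * 2 ^ (j + 1)⌋).toNat % 2

/-- The Walsh–Paley function `ω_n(x) = (−1)^{Σ_j n_j x_j}`. -/
noncomputable def walsh (n : ℕ) (x : ℝ) : ℝ :=
  (-1 : ℝ) ^ (∑ j ∈ Finset.range (n + 1), (n.testBit j).toNat * dig x j)

/-- Upper truncation `n^{(s)} = Σ_{j≥s} n_j 2^j`. -/
def upp (n s : ℕ) : ℕ := 2 ^ s * (n / 2 ^ s)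

/-- The dyadic interval of rank `a` containing `u`:
`I_a(u) = {y ∈ [0,1) : y_j = u_j for all j < a}`. -/
def Idyadic (a : ℕ) (u : ℝ) : Set ℝ :=
  {y : ℝ | y ∈ Set.Ico (0 : ℝ) 1 ∧ ∀ j < a, dig y j = dig u j}

/-- The function `F_{t²,s}` with fixed lower binary digits `k_0,…,k_{t²}` encoded by the
number `m < 2^{t²+1}`: the supremum over `n < 2^s` of the absolute value of the sum over the
free digits `k_{t²+1},…,k_{s−1}` of `ω_{k^{(t²+1)}}(x¹) ω_{(n+k)^{(t²+1)}}(x²)`, where a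
generic `k = m + r·2^{t²+1}` with `r < 2^{s−t²−1}`. -/
noncomputable def Ffun (t2 s m : ℕ) (x : ℝ × ℝ) : ENNReal :=
  ⨆ (n : ℕ) (_ : n < 2 ^ s),
    ENNReal.ofReal
      |∑ r ∈ Finset.range (2 ^ (s - t2 - 1)),
        walsh (upp (m + r * 2 ^ (t2 + 1)) (t2 + 1)) x.1 *
          walsh (upp (n + (m + r * 2 ^ (t2 + 1))) (t2 + 1)) x.2|


open Finset


/-- combinatorial Walsh character -/
noncomputable def w (k b : ℕ) : ℝ :=
  (-1 : ℝ) ^ (∑ j ∈ Finset.range (k + 1), (k.testBit j).toNat * (b.testBit j).toNat)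

lemma bitsum_congr {k N M : ℕ} (h : ℕ → ℕ) (hN : k < 2 ^ N) (hM : k < 2 ^ M) :
    ∑ j ∈ range N, (k.testBit j).toNat * h j = ∑ j ∈ range M, (k.testBit j).toNat * h j := by
  have key : ∀ {P Q : ℕ}, P ≤ Q → k < 2 ^ P →
      ∑ j ∈ range Q, (k.testBit j).toNat * h j = ∑ j ∈ range P, (k.testBit j).toNat * h j := by
    intro P Q hPQ hP
    refine (Finset.sum_subset (Finset.range_subset_range.2 hPQ) ?_).symm
    intro j _ hj
    have hPj : P ≤ j := by simpa using Finset.mem_range.not.1 hj |> Nat.le_of_not_lt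
    have : k < 2 ^ j := lt_of_lt_of_le hP (Nat.pow_le_pow_right (by norm_num) hPj)
    simp [Nat.testBit_lt_two_pow this]
  rcases le_total N M with hle | hle
  · rw [key hle hN]
  · rw [key hle hM]

lemma w_eq_bitsum {k N : ℕ} (b : ℕ) (hN : k < 2 ^ N) :
    w k b = (-1 : ℝ) ^ (∑ j ∈ range N, (k.testBit j).toNat * (b.testBit j).toNat) := by
  have hk : k < 2 ^ (k + 1) := (Nat.lt_two_pow_self : k < 2 ^ k).trans (Nat.pow_lt_pow_right (by norm_num) (by omega))
  rw [w]
  exact congrArg _ (bitsum_congr _ hk hN)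

lemma walsh_eq_w {k L : ℕ} {x : ℝ} {b : ℕ} (hk : k < 2 ^ L)
    (h : ∀ j < L, dig x j = (b.testBit j).toNat) : walsh k x = w k b := by
  unfold walsh w
  congr 1
  refine Finset.sum_congr rfl fun j _ => ?_
  rcases Bool.eq_false_or_eq_true (k.testBit j) with hb | hb
  swap
  · simp [hb]
  · have : 2 ^ j ≤ k := Nat.ge_two_pow_of_testBit hb
    have hj : j < L := by
      by_contra hj
      exact absurd (lt_of_le_of_lt this hk) (by
        have : 2 ^ L ≤ 2 ^ j := Nat.pow_le_pow_right (by norm_num) (Nat.le_of_not_lt hj)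
        omega)
    rw [h j hj]

lemma abs_w (k b : ℕ) : |w k b| = 1 := by
  rw [w, abs_pow, abs_neg, abs_one, one_pow]

lemma testBit_zero_toNat (b : ℕ) : (b.testBit 0).toNat = b % 2 := by
  rcases Nat.mod_two_eq_zero_or_one b with h | h <;> simp [Nat.testBit_zero, h]

lemma w_two_mul_add {ε : ℕ} (hε : ε ≤ 1) (k b : ℕ) :
    w (2 * k + ε) b = (-1 : ℝ) ^ (ε * (b % 2)) * w k (b / 2) := by
  have h1 : 2 * k + ε < 2 ^ (2 * k + ε + 1) :=
    (Nat.lt_two_pow_self : 2 * k + ε < 2 ^ (2 * k + ε)).trans (Nat.pow_lt_pow_right (by norm_num) (by omega))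
  rw [w_eq_bitsum b h1]
  rw [Finset.sum_range_succ' (fun j => ((2 * k + ε).testBit j).toNat * (b.testBit j).toNat)]
  have h0 : ((2 * k + ε).testBit 0).toNat = ε := by
    have hm : (2 * k + ε) % 2 = ε := by omega
    interval_cases ε <;> simp [Nat.testBit_zero, hm]
  have hsucc : ∀ j, ((2 * k + ε).testBit (j + 1)).toNat * (b.testBit (j + 1)).toNat
      = (k.testBit j).toNat * ((b / 2).testBit j).toNat := by
    intro j
    have hdiv : (2 * k + ε) / 2 = k := by omega
    rw [Nat.testBit_add_one, hdiv, Nat.testBit_add_one]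
  simp only [hsucc, h0, testBit_zero_toNat]
  have hk1 : k < 2 ^ (2 * k + ε) := by
    calc k < 2 ^ k := Nat.lt_two_pow_self
    _ ≤ 2 ^ (2 * k + ε) := Nat.pow_le_pow_right (by norm_num) (by omega)
  have hk2 : k < 2 ^ (k + 1) :=
    (Nat.lt_two_pow_self : k < 2 ^ k).trans (Nat.pow_lt_pow_right (by norm_num) (by omega))
  rw [bitsum_congr (fun j => ((b / 2).testBit j).toNat) hk1 hk2]
  rw [pow_add, mul_comm]
  rfl

lemma w_two_mul (k b : ℕ) : w (2 * k) b = w k (b / 2) := by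
  have h := w_two_mul_add (Nat.zero_le 1) k b
  simpa using h

lemma w_shift (c r b : ℕ) : w (2 ^ c * r) b = w r (b / 2 ^ c) := by
  induction c generalizing b with
  | zero => simp
  | succ c ih =>
    have : 2 ^ (c + 1) * r = 2 * (2 ^ c * r) := by ring
    rw [this, w_two_mul, ih, Nat.div_div_eq_div_mul, pow_succ, mul_comm (2^c) 2]

/-! ### The correlation sums and maximal functions -/

noncomputable def Sc (A n a b : ℕ) : ℝ := ∑ k ∈ Finset.range (2 ^ A), w k a * w (k + n) b

lemma sum_range_two_mul (N : ℕ) (f : ℕ → ℝ) :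
    ∑ k ∈ Finset.range (2 * N), f k
      = ∑ k ∈ Finset.range N, f (2 * k) + ∑ k ∈ Finset.range N, f (2 * k + 1) := by
  induction N with
  | zero => simp
  | succ N ih =>
    have h2 : 2 * (N + 1) = 2 * N + 1 + 1 := by ring
    rw [h2, Finset.sum_range_succ, Finset.sum_range_succ, ih,
      Finset.sum_range_succ, Finset.sum_range_succ]
    ring

lemma Sc_even (A n a b : ℕ) :
    Sc (A + 1) (2 * n) a b
      = (1 + (-1 : ℝ) ^ (a % 2 + b % 2)) * Sc A n (a / 2) (b / 2) := by
  unfold Sc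
  have h2 : 2 ^ (A + 1) = 2 * 2 ^ A := by rw [pow_succ]; ring
  rw [h2, sum_range_two_mul]
  have he : ∀ k, w (2 * k) a * w (2 * k + 2 * n) b = w k (a / 2) * w (k + n) (b / 2) := by
    intro k
    have : 2 * k + 2 * n = 2 * (k + n) := by ring
    rw [this, w_two_mul, w_two_mul]
  have ho : ∀ k, w (2 * k + 1) a * w (2 * k + 1 + 2 * n) b
      = (-1 : ℝ) ^ (a % 2 + b % 2) * (w k (a / 2) * w (k + n) (b / 2)) := by
    intro k
    have : 2 * k + 1 + 2 * n = 2 * (k + n) + 1 := by ring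
    rw [this, w_two_mul_add (le_refl 1), w_two_mul_add (le_refl 1), one_mul, one_mul, pow_add]
    ring
  simp only [he, ho]
  rw [← Finset.mul_sum]
  ring

lemma Sc_odd (A n a b : ℕ) :
    Sc (A + 1) (2 * n + 1) a b
      = (-1 : ℝ) ^ (b % 2) * Sc A n (a / 2) (b / 2)
        + (-1 : ℝ) ^ (a % 2) * Sc A (n + 1) (a / 2) (b / 2) := by
  unfold Sc
  have h2 : 2 ^ (A + 1) = 2 * 2 ^ A := by rw [pow_succ]; ring
  rw [h2, sum_range_two_mul]
  have he : ∀ k, w (2 * k) a * w (2 * k + (2 * n + 1)) b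
      = (-1 : ℝ) ^ (b % 2) * (w k (a / 2) * w (k + n) (b / 2)) := by
    intro k
    have : 2 * k + (2 * n + 1) = 2 * (k + n) + 1 := by ring
    rw [this, w_two_mul, w_two_mul_add (le_refl 1)]
    ring
  have ho : ∀ k, w (2 * k + 1) a * w (2 * k + 1 + (2 * n + 1)) b
      = (-1 : ℝ) ^ (a % 2) * (w k (a / 2) * w (k + (n + 1)) (b / 2)) := by
    intro k
    have : 2 * k + 1 + (2 * n + 1) = 2 * (k + (n + 1)) := by ring
    rw [this, w_two_mul_add (le_refl 1), w_two_mul]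
    ring
  simp only [he, ho]
  rw [← Finset.mul_sum, ← Finset.mul_sum]

lemma range_pow_nonempty (A : ℕ) : (Finset.range (2 ^ A)).Nonempty :=
  ⟨0, Finset.mem_range.2 (Nat.two_pow_pos A)⟩

lemma range_pow_succ_nonempty (A : ℕ) : (Finset.range (2 ^ A + 1)).Nonempty :=
  ⟨0, Finset.mem_range.2 (by positivity)⟩

noncomputable def Mx (A a b : ℕ) : ℝ :=
  (Finset.range (2 ^ A + 1)).sup' (range_pow_succ_nonempty A) (fun n => |Sc A n a b|)

noncomputable def Px (A a b : ℕ) : ℝ :=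
  (Finset.range (2 ^ A)).sup' (range_pow_nonempty A)
    (fun n => |Sc A n a b| + |Sc A (n + 1) a b|)

lemma abs_Sc_le_Mx {A n a b : ℕ} (hn : n ≤ 2 ^ A) : |Sc A n a b| ≤ Mx A a b :=
  Finset.le_sup' (fun n => |Sc A n a b|) (Finset.mem_range.2 (Nat.lt_succ_of_le hn))

lemma pair_le_Px {A n a b : ℕ} (hn : n < 2 ^ A) :
    |Sc A n a b| + |Sc A (n + 1) a b| ≤ Px A a b :=
  Finset.le_sup' (fun n => |Sc A n a b| + |Sc A (n + 1) a b|) (Finset.mem_range.2 hn)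

lemma Mx_nonneg (A a b : ℕ) : 0 ≤ Mx A a b :=
  le_trans (abs_nonneg _) (abs_Sc_le_Mx (Nat.zero_le _))

lemma Px_nonneg (A a b : ℕ) : 0 ≤ Px A a b :=
  le_trans (by positivity) (pair_le_Px (Nat.two_pow_pos A))

lemma abs_Sc_le_Px {A n a b : ℕ} (hn : n < 2 ^ A) : |Sc A n a b| ≤ Px A a b :=
  le_trans (le_add_of_nonneg_right (abs_nonneg _)) (pair_le_Px hn)

/-- Case `α ≠ β`: the parities of `a` and `b` differ. -/
lemma Mx_le_ne {A a b : ℕ} (hab : a % 2 + b % 2 = 1) :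
    Mx (A + 1) a b ≤ Px A (a / 2) (b / 2) := by
  apply Finset.sup'_le
  intro n hn
  have hn' : n ≤ 2 ^ (A + 1) := by have := Finset.mem_range.1 hn; omega
  rcases Nat.even_or_odd n with ⟨n', rfl⟩ | ⟨n', rfl⟩
  · have h : 2 * n' = n' + n' := by ring
    rw [← h] at hn' ⊢
    rw [Sc_even, hab]
    simp only [pow_one]
    norm_num
    exact Px_nonneg _ _ _
  · have hlt : n' < 2 ^ A := by rw [pow_succ] at hn'; omega
    rw [Sc_odd]
    calc |(-1 : ℝ) ^ (b % 2) * Sc A n' (a / 2) (b / 2)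
          + (-1 : ℝ) ^ (a % 2) * Sc A (n' + 1) (a / 2) (b / 2)|
        ≤ |(-1 : ℝ) ^ (b % 2) * Sc A n' (a / 2) (b / 2)|
          + |(-1 : ℝ) ^ (a % 2) * Sc A (n' + 1) (a / 2) (b / 2)| := abs_add_le _ _
      _ = |Sc A n' (a / 2) (b / 2)| + |Sc A (n' + 1) (a / 2) (b / 2)| := by
          rw [abs_mul, abs_mul, abs_pow, abs_pow]; simp
      _ ≤ Px A (a / 2) (b / 2) := pair_le_Px hlt

lemma Px_le_ne {A a b : ℕ} (hab : a % 2 + b % 2 = 1) :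
    Px (A + 1) a b ≤ Px A (a / 2) (b / 2) := by
  apply Finset.sup'_le
  intro n hn
  have hn' : n < 2 ^ (A + 1) := Finset.mem_range.1 hn
  have key : ∀ k ≤ 2 ^ (A + 1), |Sc (A + 1) k a b| ≤
      if k % 2 = 0 then 0 else Px A (a / 2) (b / 2) := by
    intro k hk
    rcases Nat.even_or_odd k with ⟨k', rfl⟩ | ⟨k', rfl⟩
    · have h : k' + k' = 2 * k' := by ring
      rw [h, Sc_even, hab]
      simp
    · have hlt : k' < 2 ^ A := by rw [pow_succ] at hk; omega
      have hm : (2 * k' + 1) % 2 = 1 := by omega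
      rw [hm, Sc_odd]
      simp only [if_neg one_ne_zero]
      calc |(-1 : ℝ) ^ (b % 2) * Sc A k' (a / 2) (b / 2)
            + (-1 : ℝ) ^ (a % 2) * Sc A (k' + 1) (a / 2) (b / 2)|
          ≤ |(-1 : ℝ) ^ (b % 2) * Sc A k' (a / 2) (b / 2)|
            + |(-1 : ℝ) ^ (a % 2) * Sc A (k' + 1) (a / 2) (b / 2)| := abs_add_le _ _
        _ = |Sc A k' (a / 2) (b / 2)| + |Sc A (k' + 1) (a / 2) (b / 2)| := by
            rw [abs_mul, abs_mul, abs_pow, abs_pow]; simp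
        _ ≤ Px A (a / 2) (b / 2) := pair_le_Px hlt
  have h1 := key n (by omega)
  have h2 := key (n + 1) (by omega)
  have hP := Px_nonneg A (a / 2) (b / 2)
  rcases Nat.even_or_odd n with he | ho
  · have : n % 2 = 0 := Nat.even_iff.1 he
    have h1' := h1; rw [if_pos this] at h1'
    have : (n + 1) % 2 = 1 := by omega
    rw [if_neg (by omega : ¬ (n + 1) % 2 = 0)] at h2
    linarith
  · have : n % 2 = 1 := Nat.odd_iff.1 ho
    rw [if_neg (by omega : ¬ n % 2 = 0)] at h1
    rw [if_pos (by omega : (n + 1) % 2 = 0)] at h2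
    linarith

lemma Mx_le_eq {A a b : ℕ} (hab : a % 2 = b % 2) :
    Mx (A + 1) a b ≤ 2 * Mx A (a / 2) (b / 2) := by
  apply Finset.sup'_le
  intro n hn
  have hn' : n ≤ 2 ^ (A + 1) := by have := Finset.mem_range.1 hn; omega
  rcases Nat.even_or_odd n with ⟨n', rfl⟩ | ⟨n', rfl⟩
  · have h : n' + n' = 2 * n' := by ring
    have hle : n' ≤ 2 ^ A := by rw [pow_succ] at hn'; omega
    rw [h, Sc_even, hab]
    have : 1 + (-1 : ℝ) ^ (b % 2 + b % 2) = 2 := by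
      rcases Nat.mod_two_eq_zero_or_one b with hb | hb <;> rw [hb] <;> norm_num
    rw [this, abs_mul, abs_two]
    have := abs_Sc_le_Mx (A := A) (a := a / 2) (b := b / 2) (n := n') hle
    linarith
  · have hlt : n' < 2 ^ A := by rw [pow_succ] at hn'; omega
    rw [Sc_odd]
    have e1 := abs_Sc_le_Mx (A := A) (a := a / 2) (b := b / 2) (n := n') (by omega)
    have e2 := abs_Sc_le_Mx (A := A) (a := a / 2) (b := b / 2) (n := n' + 1) (by omega)
    calc |(-1 : ℝ) ^ (b % 2) * Sc A n' (a / 2) (b / 2)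
          + (-1 : ℝ) ^ (a % 2) * Sc A (n' + 1) (a / 2) (b / 2)|
        ≤ |(-1 : ℝ) ^ (b % 2) * Sc A n' (a / 2) (b / 2)|
          + |(-1 : ℝ) ^ (a % 2) * Sc A (n' + 1) (a / 2) (b / 2)| := abs_add_le _ _
      _ = |Sc A n' (a / 2) (b / 2)| + |Sc A (n' + 1) (a / 2) (b / 2)| := by
          rw [abs_mul, abs_mul, abs_pow, abs_pow]; simp
      _ ≤ 2 * Mx A (a / 2) (b / 2) := by linarith

lemma Px_le_eq {A a b : ℕ} (hab : a % 2 = b % 2) :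
    Px (A + 1) a b ≤ 2 * Mx A (a / 2) (b / 2) + Px A (a / 2) (b / 2) := by
  apply Finset.sup'_le
  intro n hn
  have hn' : n < 2 ^ (A + 1) := Finset.mem_range.1 hn
  have hMx := Mx_nonneg A (a / 2) (b / 2)
  have habs : ∀ u v : ℝ, |(-1 : ℝ) ^ (b % 2) * u + (-1 : ℝ) ^ (a % 2) * v| ≤ |u| + |v| := by
    intro u v
    calc |(-1 : ℝ) ^ (b % 2) * u + (-1 : ℝ) ^ (a % 2) * v|
        ≤ |(-1 : ℝ) ^ (b % 2) * u| + |(-1 : ℝ) ^ (a % 2) * v| := abs_add_le _ _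
      _ = |u| + |v| := by rw [abs_mul, abs_mul, abs_pow, abs_pow]; simp
  have hEven : ∀ k ≤ 2 ^ A, |Sc (A + 1) (2 * k) a b| ≤ 2 * |Sc A k (a / 2) (b / 2)| := by
    intro k hk
    rw [Sc_even, hab]
    have : 1 + (-1 : ℝ) ^ (b % 2 + b % 2) = 2 := by
      rcases Nat.mod_two_eq_zero_or_one b with hb | hb <;> rw [hb] <;> norm_num
    rw [this, abs_mul, abs_two]
  rcases Nat.even_or_odd n with ⟨n', rfl⟩ | ⟨n', rfl⟩
  · have h : n' + n' = 2 * n' := by ring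
    have hlt : n' < 2 ^ A := by rw [pow_succ] at hn'; omega
    rw [h]
    have e1 := hEven n' (by omega)
    have e2 : |Sc (A + 1) (2 * n' + 1) a b| ≤ Px A (a / 2) (b / 2) := by
      rw [Sc_odd]
      exact le_trans (habs _ _) (pair_le_Px hlt)
    have e3 : |Sc A n' (a / 2) (b / 2)| ≤ Mx A (a / 2) (b / 2) := abs_Sc_le_Mx (by omega)
    linarith
  · have hlt : n' < 2 ^ A := by rw [pow_succ] at hn'; omega
    have e1 : |Sc (A + 1) (2 * n' + 1) a b| ≤ Px A (a / 2) (b / 2) := by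
      rw [Sc_odd]
      exact le_trans (habs _ _) (pair_le_Px hlt)
    have h : 2 * n' + 1 + 1 = 2 * (n' + 1) := by ring
    have e2 : |Sc (A + 1) (2 * n' + 1 + 1) a b| ≤ 2 * |Sc A (n' + 1) (a / 2) (b / 2)| := by
      rw [h]; exact hEven (n' + 1) (by omega)
    have e3 : |Sc A (n' + 1) (a / 2) (b / 2)| ≤ Mx A (a / 2) (b / 2) := abs_Sc_le_Mx (by omega)
    linarith

/-! ### Summed quantities and exponential decay -/

noncomputable def SM (A : ℕ) : ℝ :=
  ∑ a ∈ Finset.range (2 ^ A), ∑ b ∈ Finset.range (2 ^ (A + 1)), Mx A a b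

noncomputable def SP (A : ℕ) : ℝ :=
  ∑ a ∈ Finset.range (2 ^ A), ∑ b ∈ Finset.range (2 ^ (A + 1)), Px A a b

lemma SM_nonneg (A : ℕ) : 0 ≤ SM A :=
  Finset.sum_nonneg fun _ _ => Finset.sum_nonneg fun _ _ => Mx_nonneg _ _ _

lemma SP_nonneg (A : ℕ) : 0 ≤ SP A :=
  Finset.sum_nonneg fun _ _ => Finset.sum_nonneg fun _ _ => Px_nonneg _ _ _

lemma sum_split (N : ℕ) (f : ℕ → ℝ) :
    ∑ a ∈ Finset.range (2 ^ (N + 1)), f a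
      = ∑ a ∈ Finset.range (2 ^ N), (f (2 * a) + f (2 * a + 1)) := by
  have h2 : 2 ^ (N + 1) = 2 * 2 ^ N := by rw [pow_succ]; ring
  rw [h2, sum_range_two_mul, Finset.sum_add_distrib]

lemma mod_div_even (a : ℕ) : (2 * a) % 2 = 0 ∧ (2 * a) / 2 = a := by omega
lemma mod_div_odd (a : ℕ) : (2 * a + 1) % 2 = 1 ∧ (2 * a + 1) / 2 = a := by omega

lemma SM_rec (A : ℕ) : SM (A + 1) ≤ 4 * SM A + 2 * SP A := by
  unfold SM SP
  rw [sum_split]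
  have hb : ∀ a, ∑ b ∈ Finset.range (2 ^ (A + 1 + 1)), Mx (A + 1) a b
      = ∑ b ∈ Finset.range (2 ^ (A + 1)), (Mx (A + 1) a (2 * b) + Mx (A + 1) a (2 * b + 1)) :=
    fun a => sum_split (A + 1) _
  simp only [hb]
  calc ∑ a ∈ Finset.range (2 ^ A),
        (∑ b ∈ Finset.range (2 ^ (A + 1)),
            (Mx (A + 1) (2 * a) (2 * b) + Mx (A + 1) (2 * a) (2 * b + 1))
          + ∑ b ∈ Finset.range (2 ^ (A + 1)),
            (Mx (A + 1) (2 * a + 1) (2 * b) + Mx (A + 1) (2 * a + 1) (2 * b + 1)))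
      ≤ ∑ a ∈ Finset.range (2 ^ A), ∑ b ∈ Finset.range (2 ^ (A + 1)),
          (4 * Mx A a b + 2 * Px A a b) := by
        apply Finset.sum_le_sum
        intro a _
        rw [← Finset.sum_add_distrib]
        apply Finset.sum_le_sum
        intro b _
        have e00 : Mx (A + 1) (2 * a) (2 * b) ≤ 2 * Mx A a b := by
          have := Mx_le_eq (A := A) (a := 2 * a) (b := 2 * b) (by omega)
          simpa [(mod_div_even a).2, (mod_div_even b).2] using this
        have e01 : Mx (A + 1) (2 * a) (2 * b + 1) ≤ Px A a b := by
          have := Mx_le_ne (A := A) (a := 2 * a) (b := 2 * b + 1) (by omega)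
          simpa [(mod_div_even a).2, (mod_div_odd b).2] using this
        have e10 : Mx (A + 1) (2 * a + 1) (2 * b) ≤ Px A a b := by
          have := Mx_le_ne (A := A) (a := 2 * a + 1) (b := 2 * b) (by omega)
          simpa [(mod_div_odd a).2, (mod_div_even b).2] using this
        have e11 : Mx (A + 1) (2 * a + 1) (2 * b + 1) ≤ 2 * Mx A a b := by
          have := Mx_le_eq (A := A) (a := 2 * a + 1) (b := 2 * b + 1) (by omega)
          simpa [(mod_div_odd a).2, (mod_div_odd b).2] using this
        linarith
    _ = 4 * (∑ a ∈ Finset.range (2 ^ A), ∑ b ∈ Finset.range (2 ^ (A + 1)), Mx A a b)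
        + 2 * (∑ a ∈ Finset.range (2 ^ A), ∑ b ∈ Finset.range (2 ^ (A + 1)), Px A a b) := by
        simp only [Finset.sum_add_distrib, Finset.mul_sum]

lemma SP_rec (A : ℕ) : SP (A + 1) ≤ 4 * SM A + 4 * SP A := by
  unfold SM SP
  rw [sum_split]
  have hb : ∀ a, ∑ b ∈ Finset.range (2 ^ (A + 1 + 1)), Px (A + 1) a b
      = ∑ b ∈ Finset.range (2 ^ (A + 1)), (Px (A + 1) a (2 * b) + Px (A + 1) a (2 * b + 1)) :=
    fun a => sum_split (A + 1) _
  simp only [hb]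
  calc ∑ a ∈ Finset.range (2 ^ A),
        (∑ b ∈ Finset.range (2 ^ (A + 1)),
            (Px (A + 1) (2 * a) (2 * b) + Px (A + 1) (2 * a) (2 * b + 1))
          + ∑ b ∈ Finset.range (2 ^ (A + 1)),
            (Px (A + 1) (2 * a + 1) (2 * b) + Px (A + 1) (2 * a + 1) (2 * b + 1)))
      ≤ ∑ a ∈ Finset.range (2 ^ A), ∑ b ∈ Finset.range (2 ^ (A + 1)),
          (4 * Mx A a b + 4 * Px A a b) := by
        apply Finset.sum_le_sum
        intro a _
        rw [← Finset.sum_add_distrib]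
        apply Finset.sum_le_sum
        intro b _
        have e00 : Px (A + 1) (2 * a) (2 * b) ≤ 2 * Mx A a b + Px A a b := by
          have := Px_le_eq (A := A) (a := 2 * a) (b := 2 * b) (by omega)
          simpa [(mod_div_even a).2, (mod_div_even b).2] using this
        have e01 : Px (A + 1) (2 * a) (2 * b + 1) ≤ Px A a b := by
          have := Px_le_ne (A := A) (a := 2 * a) (b := 2 * b + 1) (by omega)
          simpa [(mod_div_even a).2, (mod_div_odd b).2] using this
        have e10 : Px (A + 1) (2 * a + 1) (2 * b) ≤ Px A a b := by
          have := Px_le_ne (A := A) (a := 2 * a + 1) (b := 2 * b) (by omega)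
          simpa [(mod_div_odd a).2, (mod_div_even b).2] using this
        have e11 : Px (A + 1) (2 * a + 1) (2 * b + 1) ≤ 2 * Mx A a b + Px A a b := by
          have := Px_le_eq (A := A) (a := 2 * a + 1) (b := 2 * b + 1) (by omega)
          simpa [(mod_div_odd a).2, (mod_div_odd b).2] using this
        linarith
    _ = 4 * (∑ a ∈ Finset.range (2 ^ A), ∑ b ∈ Finset.range (2 ^ (A + 1)), Mx A a b)
        + 4 * (∑ a ∈ Finset.range (2 ^ A), ∑ b ∈ Finset.range (2 ^ (A + 1)), Px A a b) := by
        simp only [Finset.sum_add_distrib, Finset.mul_sum]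

lemma SM_zero : SM 0 = 2 := by
  have hM : ∀ a b, Mx 0 a b = 1 := by
    intro a b
    apply le_antisymm
    · apply Finset.sup'_le
      intro n _
      have : Sc 0 n a b = w 0 a * w (0 + n) b := by
        unfold Sc; rw [pow_zero, Finset.sum_range_one]
      rw [this, abs_mul, abs_w, abs_w, mul_one]
    · have := abs_Sc_le_Mx (A := 0) (a := a) (b := b) (n := 0) (by norm_num)
      have h1 : Sc 0 0 a b = w 0 a * w 0 b := by
        unfold Sc; rw [pow_zero, Finset.sum_range_one]
      rw [h1, abs_mul, abs_w, abs_w, mul_one] at this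
      exact this
  unfold SM
  simp [hM]

lemma SP_zero : SP 0 = 4 := by
  have hP : ∀ a b, Px 0 a b = 2 := by
    intro a b
    have habs : ∀ n, |Sc 0 n a b| = 1 := by
      intro n
      have : Sc 0 n a b = w 0 a * w (0 + n) b := by
        unfold Sc; rw [pow_zero, Finset.sum_range_one]
      rw [this, abs_mul, abs_w, abs_w, mul_one]
    apply le_antisymm
    · apply Finset.sup'_le
      intro n _
      rw [habs, habs]; norm_num
    · have := pair_le_Px (A := 0) (a := a) (b := b) (n := 0) (by norm_num)
      rw [habs, habs] at this; linarith
  unfold SP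
  simp only [hP, Finset.sum_const, Finset.card_range]
  norm_num

noncomputable def δc : ℝ := (2 + Real.sqrt 2) / 4

lemma sqrt2_sq : Real.sqrt 2 * Real.sqrt 2 = 2 := Real.mul_self_sqrt (by norm_num)

lemma sqrt2_pos : 0 < Real.sqrt 2 := Real.sqrt_pos.2 (by norm_num)

lemma sqrt2_lt_two : Real.sqrt 2 < 2 := by
  nlinarith [sqrt2_sq, sqrt2_pos]

lemma δc_pos : 0 < δc := by unfold δc; positivity

lemma δc_lt_one : δc < 1 := by
  unfold δc
  linarith [sqrt2_lt_two]

lemma δc_gt_half : 1 / 2 < δc := by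
  unfold δc
  linarith [sqrt2_pos]

lemma SM_le (A : ℕ) :
    SM A + Real.sqrt 2 / 2 * SP A ≤ (2 + 2 * Real.sqrt 2) * (8 * δc) ^ A := by
  induction A with
  | zero =>
    rw [SM_zero, SP_zero, pow_zero, mul_one]
    linarith [sqrt2_sq]
  | succ A ih =>
    have h8δ : 8 * δc = 4 + 2 * Real.sqrt 2 := by unfold δc; ring
    have hrec1 := SM_rec A
    have hrec2 := SP_rec A
    have hs2 := sqrt2_pos
    calc SM (A + 1) + Real.sqrt 2 / 2 * SP (A + 1)
        ≤ (4 * SM A + 2 * SP A) + Real.sqrt 2 / 2 * (4 * SM A + 4 * SP A) := by nlinarith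
      _ = (8 * δc) * (SM A + Real.sqrt 2 / 2 * SP A) := by
          rw [h8δ]; linear_combination (- SP A) * sqrt2_sq
      _ ≤ (8 * δc) * ((2 + 2 * Real.sqrt 2) * (8 * δc) ^ A) := by
          apply mul_le_mul_of_nonneg_left ih
          have := δc_pos; linarith
      _ = (2 + 2 * Real.sqrt 2) * (8 * δc) ^ (A + 1) := by ring

lemma SM_bound (A : ℕ) : SM A ≤ (2 + 2 * Real.sqrt 2) * (8 * δc) ^ A := by
  have h := SM_le A
  have := SP_nonneg A
  nlinarith [sqrt2_pos]

/-! ### Digit geometry -/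

open MeasureTheory

lemma dig_lt_two (x : ℝ) (j : ℕ) : dig x j < 2 := Nat.mod_lt _ (by norm_num)

lemma floor_succ_dig {x : ℝ} (hx : 0 ≤ x) (N : ℕ) :
    ⌊x * 2 ^ (N + 1)⌋ = 2 * ⌊x * 2 ^ N⌋ + dig x N := by
  set y := x * 2 ^ N with hy
  have hxy : x * 2 ^ (N + 1) = 2 * y := by rw [hy]; ring
  have hy0 : 0 ≤ y := by positivity
  have h1 : 2 * ⌊y⌋ ≤ ⌊2 * y⌋ := by
    apply Int.le_floor.2
    push_cast
    linarith [Int.floor_le y]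
  have h2 : ⌊2 * y⌋ < 2 * ⌊y⌋ + 2 := by
    apply Int.floor_lt.2
    push_cast
    linarith [Int.lt_floor_add_one y]
  have hfy : 0 ≤ ⌊y⌋ := Int.floor_nonneg.2 hy0
  have hdig : dig x N = (⌊2 * y⌋).toNat % 2 := by rw [dig, hxy]
  rw [hxy, hdig]
  omega

/-- The integer with binary digits `β (N-1) … β 0`. -/
def Phi (β : ℕ → ℕ) : ℕ → ℤ
  | 0 => 0
  | (N + 1) => 2 * Phi β N + β N

lemma Phi_congr {β γ : ℕ → ℕ} : ∀ N, (∀ j < N, β j = γ j) → Phi β N = Phi γ N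
  | 0, _ => rfl
  | (N + 1), h => by
    rw [Phi, Phi, Phi_congr N (fun j hj => h j (by omega)), h N (by omega)]

lemma floor_eq_Phi {x : ℝ} (hx : x ∈ Set.Ico (0 : ℝ) 1) :
    ∀ N, ⌊x * 2 ^ N⌋ = Phi (dig x) N := by
  intro N
  induction N with
  | zero =>
    rw [pow_zero, mul_one, Phi]
    exact Int.floor_eq_zero_iff.2 (by simpa using hx)
  | succ N ih => rw [floor_succ_dig hx.1, ih, Phi]

lemma mem_Ico_of_digs {x : ℝ} (hx : x ∈ Set.Ico (0 : ℝ) 1) {N : ℕ} {β : ℕ → ℕ}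
    (h : ∀ j < N, dig x j = β j) :
    x ∈ Set.Ico ((Phi β N : ℝ) / 2 ^ N) ((Phi β N + 1 : ℝ) / 2 ^ N) := by
  have hP : ⌊x * 2 ^ N⌋ = Phi β N := by
    rw [floor_eq_Phi hx N]
    exact Phi_congr N h
  have h2 : (0 : ℝ) < 2 ^ N := by positivity
  constructor
  · rw [div_le_iff₀ h2]
    have := Int.floor_le (x * 2 ^ N)
    rw [hP] at this
    linarith
  · rw [lt_div_iff₀ h2]
    have := Int.lt_floor_add_one (x * 2 ^ N)
    rw [hP] at this
    push_cast at this ⊢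
    linarith

lemma volume_digs_le {N : ℕ} {β : ℕ → ℕ} {S : Set ℝ}
    (hS : ∀ x ∈ S, x ∈ Set.Ico (0 : ℝ) 1 ∧ ∀ j < N, dig x j = β j) :
    volume S ≤ ENNReal.ofReal ((2 ^ N : ℝ)⁻¹) := by
  have hsub : S ⊆ Set.Ico ((Phi β N : ℝ) / 2 ^ N) ((Phi β N + 1 : ℝ) / 2 ^ N) := by
    intro x hx
    exact mem_Ico_of_digs (hS x hx).1 (hS x hx).2
  calc volume S ≤ volume (Set.Ico ((Phi β N : ℝ) / 2 ^ N) ((Phi β N + 1 : ℝ) / 2 ^ N)) :=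
        measure_mono hsub
    _ = ENNReal.ofReal ((2 ^ N : ℝ)⁻¹) := by
        rw [Real.volume_Ico]
        congr 1
        push_cast
        field_simp
        ring

lemma measurable_dig (j : ℕ) : Measurable (fun x : ℝ => dig x j) := by
  unfold dig
  have h1 : Measurable fun x : ℝ => ⌊x * 2 ^ (j + 1)⌋ :=
    Int.measurable_floor.comp (measurable_id.mul_const _)
  have h2 : Measurable fun n : ℤ => n.toNat % 2 := measurable_of_countable _
  exact h2.comp h1

/-! ### Bit codes of real numbers -/

/-- The number whose binary digits are `dig x (c+j)`, `j < B`. -/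
noncomputable def cod (B c : ℕ) (x : ℝ) : ℕ := ∑ j ∈ Finset.range B, dig x (c + j) * 2 ^ j

lemma sum_digits_lt {B : ℕ} {d : ℕ → ℕ} (hd : ∀ j, d j ≤ 1) :
    ∑ j ∈ Finset.range B, d j * 2 ^ j < 2 ^ B := by
  induction B with
  | zero => simp
  | succ B ih =>
    rw [Finset.sum_range_succ, pow_succ]
    have h1 := hd B
    have h2 : d B * 2 ^ B ≤ 1 * 2 ^ B := Nat.mul_le_mul_right _ h1
    omega

lemma cod_lt (B c : ℕ) (x : ℝ) : cod B c x < 2 ^ B :=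
  sum_digits_lt fun j => by have := dig_lt_two x (c + j); omega

lemma div_mod_sum_digits {B : ℕ} {d : ℕ → ℕ} (hd : ∀ j, d j ≤ 1) {i : ℕ} (hi : i < B) :
    (∑ j ∈ Finset.range B, d j * 2 ^ j) / 2 ^ i % 2 = d i := by
  have hsplit : B = (i + 1) + (B - i - 1) := by omega
  rw [hsplit, Finset.sum_range_add, Finset.sum_range_succ]
  have hL : ∑ j ∈ Finset.range i, d j * 2 ^ j < 2 ^ i := sum_digits_lt hd
  set K := ∑ j ∈ Finset.range (B - i - 1), d (i + 1 + j) * 2 ^ j with hK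
  have hhigh : ∑ j ∈ Finset.range (B - i - 1), d (i + 1 + j) * 2 ^ (i + 1 + j)
      = K * (2 ^ i * 2) := by
    rw [hK, Finset.sum_mul]
    apply Finset.sum_congr rfl
    intro j _
    ring
  rw [hhigh]
  have hre : ∑ j ∈ Finset.range i, d j * 2 ^ j + d i * 2 ^ i + K * (2 ^ i * 2)
      = ∑ j ∈ Finset.range i, d j * 2 ^ j + 2 ^ i * (d i + 2 * K) := by ring
  rw [hre, Nat.add_mul_div_left _ _ (Nat.two_pow_pos i),
    Nat.div_eq_of_lt hL]
  have := hd i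
  omega

lemma dig_eq_testBit_cod {B c : ℕ} {x : ℝ} {j : ℕ} (hj : j < B) :
    dig x (c + j) = ((cod B c x).testBit j).toNat := by
  rw [Nat.testBit_eq_decide_div_mod_eq]
  rw [cod, div_mod_sum_digits (fun j => by have := dig_lt_two x (c + j); omega) hj]
  have := dig_lt_two x (c + j)
  interval_cases h : dig x (c + j) <;> simp

lemma measurable_cod (B c : ℕ) : Measurable (cod B c) := by
  unfold cod
  exact Finset.measurable_sum _ fun j _ => (measurable_dig (c + j)).mul_const _

/-! ### The gluing lemma -/

lemma glue (c B1 B2 : ℕ) (T1 T2 : Set ℝ) (β1 β2 : ℕ → ℕ)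
    (hT1 : MeasurableSet T1) (hT2 : MeasurableSet T2)
    (hT1' : ∀ x ∈ T1, x ∈ Set.Ico (0 : ℝ) 1 ∧ ∀ j < c, dig x j = β1 j)
    (hT2' : ∀ x ∈ T2, x ∈ Set.Ico (0 : ℝ) 1 ∧ ∀ j < c, dig x j = β2 j)
    (f : ℝ × ℝ → ENNReal) (v : ℕ → ℕ → ℝ)
    (hf : ∀ x ∈ T1 ×ˢ T2, f x ≤ ENNReal.ofReal (v (cod B1 c x.1) (cod B2 c x.2))) :
    ∫⁻ x in T1 ×ˢ T2, f x
      ≤ ENNReal.ofReal ((2 ^ (c + B1) * 2 ^ (c + B2) : ℝ)⁻¹)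
          * ∑ a ∈ Finset.range (2 ^ B1), ∑ b ∈ Finset.range (2 ^ B2),
              ENNReal.ofReal (v a b) := by
  classical
  set piece : ℕ → ℕ → Set (ℝ × ℝ) := fun a b =>
    (T1 ∩ {y | cod B1 c y = a}) ×ˢ (T2 ∩ {y | cod B2 c y = b}) with hpiece
  have hpm : ∀ a b, MeasurableSet (piece a b) := by
    intro a b
    exact ((hT1.inter ((measurable_cod B1 c) (measurableSet_singleton a))).prod
      (hT2.inter ((measurable_cod B2 c) (measurableSet_singleton b))))
  set g : ℝ × ℝ → ENNReal := fun x =>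
    ∑ a ∈ Finset.range (2 ^ B1), ∑ b ∈ Finset.range (2 ^ B2),
      (piece a b).indicator (fun _ => ENNReal.ofReal (v a b)) x with hg
  have hgm : Measurable g := by
    apply Finset.measurable_sum
    intro a _
    apply Finset.measurable_sum
    intro b _
    exact measurable_const.indicator (hpm a b)
  have hfg : ∀ x ∈ T1 ×ˢ T2, f x ≤ g x := by
    intro x hx
    have hmem : x ∈ piece (cod B1 c x.1) (cod B2 c x.2) := by
      refine ⟨⟨hx.1, rfl⟩, ⟨hx.2, rfl⟩⟩
    calc f x ≤ ENNReal.ofReal (v (cod B1 c x.1) (cod B2 c x.2)) := hf x hx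
      _ = (piece (cod B1 c x.1) (cod B2 c x.2)).indicator
            (fun _ => ENNReal.ofReal (v (cod B1 c x.1) (cod B2 c x.2))) x := by
          rw [Set.indicator_of_mem hmem]
      _ ≤ g x := by
          rw [hg]
          set a0 := cod B1 c x.1
          set b0 := cod B2 c x.2
          have h1 : (piece a0 b0).indicator (fun _ => ENNReal.ofReal (v a0 b0)) x
              ≤ ∑ b ∈ Finset.range (2 ^ B2),
                  (piece a0 b).indicator (fun _ => ENNReal.ofReal (v a0 b)) x :=
            Finset.single_le_sum (f := fun b =>
                (piece a0 b).indicator (fun _ => ENNReal.ofReal (v a0 b)) x)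
              (fun _ _ => zero_le) (Finset.mem_range.2 (cod_lt B2 c x.2))
          have h2 : ∑ b ∈ Finset.range (2 ^ B2),
                  (piece a0 b).indicator (fun _ => ENNReal.ofReal (v a0 b)) x
              ≤ ∑ a ∈ Finset.range (2 ^ B1), ∑ b ∈ Finset.range (2 ^ B2),
                  (piece a b).indicator (fun _ => ENNReal.ofReal (v a b)) x :=
            Finset.single_le_sum (f := fun a => ∑ b ∈ Finset.range (2 ^ B2),
                  (piece a b).indicator (fun _ => ENNReal.ofReal (v a b)) x)
              (fun _ _ => zero_le) (Finset.mem_range.2 (cod_lt B1 c x.1))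
          exact le_trans h1 h2
  have hTm : MeasurableSet (T1 ×ˢ T2) := hT1.prod hT2
  have hvol : ∀ a b, volume (piece a b) ≤ ENNReal.ofReal ((2 ^ (c + B1) * 2 ^ (c + B2) : ℝ)⁻¹) := by
    intro a b
    have hv1 : volume (T1 ∩ {y | cod B1 c y = a}) ≤ ENNReal.ofReal ((2 ^ (c + B1) : ℝ)⁻¹) := by
      apply volume_digs_le (β := fun j => if j < c then β1 j else (a.testBit (j - c)).toNat)
      intro y hy
      refine ⟨(hT1' y hy.1).1, ?_⟩
      intro j hj
      by_cases hjc : j < c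
      · rw [if_pos hjc]; exact (hT1' y hy.1).2 j hjc
      · rw [if_neg hjc]
        have hj' : j - c < B1 := by omega
        have := dig_eq_testBit_cod (c := c) (x := y) hj'
        rw [← hy.2]
        rw [show c + (j - c) = j by omega] at this
        exact this
    have hv2 : volume (T2 ∩ {y | cod B2 c y = b}) ≤ ENNReal.ofReal ((2 ^ (c + B2) : ℝ)⁻¹) := by
      apply volume_digs_le (β := fun j => if j < c then β2 j else (b.testBit (j - c)).toNat)
      intro y hy
      refine ⟨(hT2' y hy.1).1, ?_⟩
      intro j hj
      by_cases hjc : j < c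
      · rw [if_pos hjc]; exact (hT2' y hy.1).2 j hjc
      · rw [if_neg hjc]
        have hj' : j - c < B2 := by omega
        have := dig_eq_testBit_cod (c := c) (x := y) hj'
        rw [← hy.2]
        rw [show c + (j - c) = j by omega] at this
        exact this
    calc volume (piece a b)
        = volume (T1 ∩ {y | cod B1 c y = a}) * volume (T2 ∩ {y | cod B2 c y = b}) := by
          rw [hpiece]
          rw [show (volume : Measure (ℝ × ℝ)) = (volume : Measure ℝ).prod volume from rfl]
          exact Measure.prod_prod _ _
      _ ≤ ENNReal.ofReal ((2 ^ (c + B1) : ℝ)⁻¹) * ENNReal.ofReal ((2 ^ (c + B2) : ℝ)⁻¹) :=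
          mul_le_mul' hv1 hv2
      _ = ENNReal.ofReal ((2 ^ (c + B1) * 2 ^ (c + B2) : ℝ)⁻¹) := by
          rw [← ENNReal.ofReal_mul (by positivity)]
          congr 1
          rw [mul_inv]
  calc ∫⁻ x in T1 ×ˢ T2, f x ≤ ∫⁻ x in T1 ×ˢ T2, g x := setLIntegral_mono hgm hfg
    _ ≤ ∫⁻ x, g x := setLIntegral_le_lintegral _ _
    _ = ∑ a ∈ Finset.range (2 ^ B1), ∑ b ∈ Finset.range (2 ^ B2),
          ∫⁻ x, (piece a b).indicator (fun _ => ENNReal.ofReal (v a b)) x := by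
        rw [hg]
        rw [lintegral_finset_sum]
        · apply Finset.sum_congr rfl
          intro a _
          rw [lintegral_finset_sum]
          intro b _
          exact measurable_const.indicator (hpm a b)
        · intro a _
          apply Finset.measurable_sum
          intro b _
          exact measurable_const.indicator (hpm a b)
    _ ≤ ∑ a ∈ Finset.range (2 ^ B1), ∑ b ∈ Finset.range (2 ^ B2),
          ENNReal.ofReal (v a b) * ENNReal.ofReal ((2 ^ (c + B1) * 2 ^ (c + B2) : ℝ)⁻¹) := by
        apply Finset.sum_le_sum
        intro a _
        apply Finset.sum_le_sum
        intro b _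
        rw [lintegral_indicator (hpm a b), setLIntegral_const]
        exact mul_le_mul' le_rfl (hvol a b)
    _ = ENNReal.ofReal ((2 ^ (c + B1) * 2 ^ (c + B2) : ℝ)⁻¹)
          * ∑ a ∈ Finset.range (2 ^ B1), ∑ b ∈ Finset.range (2 ^ B2),
              ENNReal.ofReal (v a b) := by
        rw [Finset.mul_sum]
        apply Finset.sum_congr rfl
        intro a _
        rw [Finset.mul_sum]
        apply Finset.sum_congr rfl
        intro b _
        rw [mul_comm]

/-! ### Bridges between `walsh` and `w` -/

lemma walsh_eq_w_cod {B : ℕ} {x : ℝ} {k : ℕ} (hk : k < 2 ^ B) :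
    walsh k x = w k (cod B 0 x) := by
  apply walsh_eq_w hk
  intro j hj
  have := dig_eq_testBit_cod (c := 0) (x := x) (B := B) hj
  simpa using this

lemma cod_div (B c : ℕ) (x : ℝ) : cod (c + B) 0 x / 2 ^ c = cod B c x := by
  unfold cod
  rw [Finset.sum_range_add]
  have hL : ∑ j ∈ Finset.range c, dig x (0 + j) * 2 ^ j < 2 ^ c :=
    sum_digits_lt fun j => by have := dig_lt_two x (0 + j); omega
  have hhigh : ∑ j ∈ Finset.range B, dig x (0 + (c + j)) * 2 ^ (c + j)
      = 2 ^ c * ∑ j ∈ Finset.range B, dig x (c + j) * 2 ^ j := by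
    rw [Finset.mul_sum]
    apply Finset.sum_congr rfl
    intro j _
    rw [zero_add, pow_add]
    ring
  rw [hhigh, Nat.add_mul_div_left _ _ (Nat.two_pow_pos c),
    Nat.div_eq_of_lt hL]
  omega

lemma walsh_shift_eq_w {B c : ℕ} {x : ℝ} {r : ℕ} (hr : r < 2 ^ B) :
    walsh (2 ^ c * r) x = w r (cod B c x) := by
  have h1 : 2 ^ c * r < 2 ^ (c + B) := by
    rw [pow_add]
    exact Nat.mul_lt_mul_of_le_of_lt (le_refl _) hr (by positivity)
  rw [walsh_eq_w_cod h1, w_shift, cod_div]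

lemma measurable_Idyadic (a : ℕ) (u : ℝ) : MeasurableSet (Idyadic a u) := by
  have : Idyadic a u = Set.Ico (0 : ℝ) 1 ∩ ⋂ j ∈ Set.Iio a, (fun y => dig y j) ⁻¹' {dig u j} := by
    ext y
    simp only [Idyadic, Set.mem_setOf_eq, Set.mem_inter_iff, Set.mem_iInter, Set.mem_Iio,
      Set.mem_preimage, Set.mem_singleton_iff]
  rw [this]
  exact measurableSet_Ico.inter
    (MeasurableSet.biInter (Set.to_countable _)
      (fun j _ => measurable_dig j (measurableSet_singleton _)))

/-! ### Clause 1: the exponential-decay lemma -/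

lemma clause1 (A : ℕ) :
    ∫⁻ x in Set.Ico (0 : ℝ) 1 ×ˢ Set.Ico (0 : ℝ) 1,
      ⨆ (n : ℕ) (_ : n ≤ 2 ^ A),
        ENNReal.ofReal
          |(2 ^ A : ℝ)⁻¹ * ∑ k ∈ Finset.range (2 ^ A), walsh k x.1 * walsh (k + n) x.2|
    ≤ ENNReal.ofReal ((1 + Real.sqrt 2) * δc ^ A) := by
  have hglue := glue 0 A (A + 1) (Set.Ico (0 : ℝ) 1) (Set.Ico (0 : ℝ) 1)
    (fun _ => 0) (fun _ => 0) measurableSet_Ico measurableSet_Ico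
    (fun x hx => ⟨hx, fun j hj => by omega⟩) (fun x hx => ⟨hx, fun j hj => by omega⟩)
    (fun x => ⨆ (n : ℕ) (_ : n ≤ 2 ^ A),
        ENNReal.ofReal
          |(2 ^ A : ℝ)⁻¹ * ∑ k ∈ Finset.range (2 ^ A), walsh k x.1 * walsh (k + n) x.2|)
    (fun a b => (2 ^ A : ℝ)⁻¹ * Mx A a b) ?_
  · refine le_trans hglue ?_
    have hsum : ∑ a ∈ Finset.range (2 ^ A), ∑ b ∈ Finset.range (2 ^ (A + 1)),
        ENNReal.ofReal ((2 ^ A : ℝ)⁻¹ * Mx A a b)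
        = ENNReal.ofReal ((2 ^ A : ℝ)⁻¹ * SM A) := by
      rw [SM, Finset.mul_sum, ENNReal.ofReal_sum_of_nonneg]
      · apply Finset.sum_congr rfl
        intro a _
        rw [Finset.mul_sum, ENNReal.ofReal_sum_of_nonneg]
        intro b _
        have := Mx_nonneg A a b
        positivity
      · intro a _
        have : (0 : ℝ) ≤ ∑ b ∈ Finset.range (2 ^ (A + 1)), Mx A a b :=
          Finset.sum_nonneg fun b _ => Mx_nonneg A a b
        positivity
    rw [hsum, ← ENNReal.ofReal_mul (by positivity)]
    apply ENNReal.ofReal_le_ofReal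
    have hSM := SM_bound A
    have h2A : (0 : ℝ) < 2 ^ A := by positivity
    have hδA : (0 : ℝ) ≤ δc ^ A := le_of_lt (pow_pos δc_pos A)
    have step : (2 ^ (0 + A) * 2 ^ (0 + (A + 1)) : ℝ)⁻¹ * ((2 ^ A : ℝ)⁻¹ * SM A)
        ≤ (2 ^ A * 2 ^ (A + 1) : ℝ)⁻¹ * ((2 ^ A : ℝ)⁻¹
            * ((2 + 2 * Real.sqrt 2) * (8 ^ A * δc ^ A))) := by
      rw [zero_add, zero_add]
      have hmul : (0 : ℝ) ≤ (2 ^ A * 2 ^ (A + 1) : ℝ)⁻¹ := by positivity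
      have hmul2 : (0 : ℝ) ≤ (2 ^ A : ℝ)⁻¹ := by positivity
      have : SM A ≤ (2 + 2 * Real.sqrt 2) * (8 ^ A * δc ^ A) := by
        rw [← mul_pow]; exact hSM
      nlinarith [mul_le_mul_of_nonneg_left this hmul2,
        mul_le_mul_of_nonneg_left (mul_le_mul_of_nonneg_left this hmul2) hmul]
    refine le_trans step (le_of_eq ?_)
    have h8 : (8 : ℝ) ^ A = 2 ^ A * 2 ^ A * 2 ^ A := by
      rw [show (8 : ℝ) = 2 * 2 * 2 by norm_num, mul_pow, mul_pow]
    rw [h8, pow_succ]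
    field_simp
  · intro x hx
    apply iSup_le
    intro n
    apply iSup_le
    intro hn
    have hsum : ∑ k ∈ Finset.range (2 ^ A), walsh k x.1 * walsh (k + n) x.2
        = Sc A n (cod A 0 x.1) (cod (A + 1) 0 x.2) := by
      apply Finset.sum_congr rfl
      intro k hk
      have hk' : k < 2 ^ A := Finset.mem_range.1 hk
      have hkn : k + n < 2 ^ (A + 1) := by
        rw [pow_succ]; omega
      rw [walsh_eq_w_cod hk', walsh_eq_w_cod hkn]
    rw [hsum]
    apply ENNReal.ofReal_le_ofReal
    rw [abs_mul]
    have h1 : |(2 ^ A : ℝ)⁻¹| = (2 ^ A : ℝ)⁻¹ := abs_of_nonneg (by positivity)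
    rw [h1]
    exact mul_le_mul_of_nonneg_left (abs_Sc_le_Mx hn) (by positivity)

/-! ### Clause 2: Statement 10 -/

lemma clause2 (t2 s : ℕ) (hts : t2 < s) (m : ℕ) (hm : m < 2 ^ (t2 + 1))
    (u : ℝ × ℝ) (hu : u ∈ Set.Ico (0 : ℝ) 1 ×ˢ Set.Ico (0 : ℝ) 1) :
    (2 : ENNReal) ^ (2 * t2) *
        ∫⁻ x in Idyadic (t2 + 1) u.1 ×ˢ Idyadic (t2 + 1) u.2, Ffun t2 s m x
      ≤ ENNReal.ofReal ((1 + Real.sqrt 2) * 2 ^ (s - t2) * δc ^ (s - t2)) := by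
  set c : ℕ := t2 + 1 with hc
  set B : ℕ := s - t2 - 1 with hB
  have hsB : s - t2 = B + 1 := by omega
  have hscB : s = c + B := by omega
  have hglue := glue c B (B + 1) (Idyadic c u.1) (Idyadic c u.2)
    (fun j => dig u.1 j) (fun j => dig u.2 j)
    (measurable_Idyadic c u.1) (measurable_Idyadic c u.2)
    (fun x hx => hx) (fun x hx => hx)
    (Ffun t2 s m) (fun a b => Mx B a b) ?_
  · calc (2 : ENNReal) ^ (2 * t2) *
          ∫⁻ x in Idyadic (t2 + 1) u.1 ×ˢ Idyadic (t2 + 1) u.2, Ffun t2 s m x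
        ≤ (2 : ENNReal) ^ (2 * t2) *
            (ENNReal.ofReal ((2 ^ (c + B) * 2 ^ (c + (B + 1)) : ℝ)⁻¹)
              * ∑ a ∈ Finset.range (2 ^ B), ∑ b ∈ Finset.range (2 ^ (B + 1)),
                  ENNReal.ofReal (Mx B a b)) := by
          exact mul_le_mul' le_rfl hglue
      _ = ENNReal.ofReal ((2 : ℝ) ^ (2 * t2)
            * ((2 ^ (c + B) * 2 ^ (c + (B + 1)) : ℝ)⁻¹ * SM B)) := by
          have hsum : ∑ a ∈ Finset.range (2 ^ B), ∑ b ∈ Finset.range (2 ^ (B + 1)),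
              ENNReal.ofReal (Mx B a b) = ENNReal.ofReal (SM B) := by
            rw [SM, ENNReal.ofReal_sum_of_nonneg]
            · apply Finset.sum_congr rfl
              intro a _
              rw [ENNReal.ofReal_sum_of_nonneg]
              intro b _
              exact Mx_nonneg B a b
            · intro a _
              exact Finset.sum_nonneg fun b _ => Mx_nonneg B a b
          rw [hsum, ← ENNReal.ofReal_mul (by positivity)]
          rw [show ((2 : ENNReal) ^ (2 * t2)) = ENNReal.ofReal ((2 : ℝ) ^ (2 * t2)) by
            rw [ENNReal.ofReal_pow (by norm_num)]
            norm_num]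
          rw [← ENNReal.ofReal_mul (by positivity)]
      _ ≤ ENNReal.ofReal ((1 + Real.sqrt 2) * 2 ^ (s - t2) * δc ^ (s - t2)) := by
          apply ENNReal.ofReal_le_ofReal
          rw [hsB]
          have hSM := SM_bound B
          have hδB : (0 : ℝ) < δc ^ B := pow_pos δc_pos B
          have h2 : (0 : ℝ) ≤ (2 : ℝ) ^ (2 * t2) * (2 ^ (c + B) * 2 ^ (c + (B + 1)) : ℝ)⁻¹ := by
            positivity
          have step : (2 : ℝ) ^ (2 * t2) * ((2 ^ (c + B) * 2 ^ (c + (B + 1)) : ℝ)⁻¹ * SM B)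
              ≤ (2 : ℝ) ^ (2 * t2) * ((2 ^ (c + B) * 2 ^ (c + (B + 1)) : ℝ)⁻¹
                  * ((2 + 2 * Real.sqrt 2) * (8 ^ B * δc ^ B))) := by
            have hSM' : SM B ≤ (2 + 2 * Real.sqrt 2) * (8 ^ B * δc ^ B) := by
              rw [← mul_pow]; exact hSM
            have hpos : (0 : ℝ) ≤ (2 ^ (c + B) * 2 ^ (c + (B + 1)) : ℝ)⁻¹ := by positivity
            have h2t : (0 : ℝ) ≤ (2 : ℝ) ^ (2 * t2) := by positivity
            exact mul_le_mul_of_nonneg_left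
              (mul_le_mul_of_nonneg_left hSM' hpos) h2t
          refine le_trans step ?_
          have heq : (2 : ℝ) ^ (2 * t2) * ((2 ^ (c + B) * 2 ^ (c + (B + 1)) : ℝ)⁻¹
                  * ((2 + 2 * Real.sqrt 2) * (8 ^ B * δc ^ B)))
              = (1 + Real.sqrt 2) * 2 ^ (B + 1) * δc ^ B / 8 := by
            have h8 : (8 : ℝ) ^ B = 2 ^ B * 2 ^ B * 2 ^ B := by
              rw [show (8 : ℝ) = 2 * 2 * 2 by norm_num, mul_pow, mul_pow]
            have e1 : (2 : ℝ) ^ (c + B) = 2 ^ t2 * 2 * 2 ^ B := by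
              rw [hc, pow_add, pow_add, pow_one]
            have e2 : (2 : ℝ) ^ (c + (B + 1)) = 2 ^ t2 * 2 * 2 ^ B * 2 := by
              rw [hc, pow_add, pow_add, pow_add, pow_one]
              ring
            have e3 : (2 : ℝ) ^ (2 * t2) = 2 ^ t2 * 2 ^ t2 := by
              rw [two_mul, pow_add]
            have e4 : (2 : ℝ) ^ (B + 1) = 2 ^ B * 2 := by rw [pow_succ]
            rw [e1, e2, e3, e4, h8]
            have ht2 : (0 : ℝ) < 2 ^ t2 := by positivity
            have hB2 : (0 : ℝ) < 2 ^ B := by positivity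
            field_simp
            ring
          rw [heq]
          have hδ2 : (1 : ℝ) / 8 ≤ δc := le_trans (by norm_num) (le_of_lt δc_gt_half)
          have hpos2 : (0 : ℝ) < (1 + Real.sqrt 2) * 2 ^ (B + 1) * δc ^ B := by
            have := sqrt2_pos
            positivity
          calc (1 + Real.sqrt 2) * 2 ^ (B + 1) * δc ^ B / 8
              = ((1 + Real.sqrt 2) * 2 ^ (B + 1) * δc ^ B) * (1 / 8) := by ring
            _ ≤ ((1 + Real.sqrt 2) * 2 ^ (B + 1) * δc ^ B) * δc :=
                mul_le_mul_of_nonneg_left hδ2 (le_of_lt hpos2)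
            _ = (1 + Real.sqrt 2) * 2 ^ (B + 1) * δc ^ (B + 1) := by
                rw [pow_succ]; ring
  · -- pointwise bound for Ffun on the dyadic square
    intro x hx
    unfold Ffun
    apply iSup_le
    intro n
    apply iSup_le
    intro hn
    set q : ℕ := (n + m) / 2 ^ c with hq
    have hq2 : q ≤ 2 ^ B := by
      have h2c : 0 < 2 ^ c := Nat.two_pow_pos c
      have hnm : n + m < (2 ^ B + 1) * 2 ^ c := by
        have h1 : n < 2 ^ s := hn
        have h2 : 2 ^ s = 2 ^ c * 2 ^ B := by rw [← pow_add, ← hscB]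
        have := hm
        nlinarith
      have hlt : (n + m) / 2 ^ c < 2 ^ B + 1 := (Nat.div_lt_iff_lt_mul h2c).2 hnm
      omega
    have hterm : ∀ r ∈ Finset.range (2 ^ (s - t2 - 1)),
        walsh (upp (m + r * 2 ^ (t2 + 1)) (t2 + 1)) x.1 *
            walsh (upp (n + (m + r * 2 ^ (t2 + 1))) (t2 + 1)) x.2
          = w r (cod B c x.1) * w (r + q) (cod (B + 1) c x.2) := by
      intro r hr
      have hr' : r < 2 ^ B := by
        have h := Finset.mem_range.1 hr
        rwa [← hB] at h
      have hu1 : upp (m + r * 2 ^ (t2 + 1)) (t2 + 1) = 2 ^ c * r := by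
        rw [upp, ← hc]
        congr 1
        rw [Nat.add_mul_div_right _ _ (Nat.two_pow_pos c),
          Nat.div_eq_of_lt hm]
        omega
      have hu2 : upp (n + (m + r * 2 ^ (t2 + 1))) (t2 + 1) = 2 ^ c * (q + r) := by
        rw [upp, ← hc]
        congr 1
        rw [show n + (m + r * 2 ^ c) = (n + m) + r * 2 ^ c by ring,
          Nat.add_mul_div_right _ _ (Nat.two_pow_pos c), hq]
      have hqr : q + r < 2 ^ (B + 1) := by
        rw [pow_succ]; omega
      rw [hu1, hu2, walsh_shift_eq_w hr', walsh_shift_eq_w hqr, add_comm q r]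
    rw [Finset.sum_congr rfl hterm]
    apply ENNReal.ofReal_le_ofReal
    have : ∑ r ∈ Finset.range (2 ^ (s - t2 - 1)),
        w r (cod B c x.1) * w (r + q) (cod (B + 1) c x.2)
        = Sc B q (cod B c x.1) (cod (B + 1) c x.2) := by
      rw [Sc, hB]
    rw [this]
    exact abs_Sc_le_Mx hq2

/-- With `δ` the constant of the exponential-decay lemma, for all
`t² < s`, all fixed lower digits and all dyadic squares `I_{t²+1}(u¹) × I_{t²+1}(u²)` one has
`2^{2t²} ∫ F_{t²,s} ≤ C 2^{s−t²} δ^{s−t²}`. -/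
theorem F_integral_bound :
    ∃ C : ℝ, 0 < C ∧ ∃ δ : ℝ, 0 < δ ∧ δ < 1 ∧
      (∀ A : ℕ,
        ∫⁻ x in Set.Ico (0 : ℝ) 1 ×ˢ Set.Ico (0 : ℝ) 1,
          ⨆ (n : ℕ) (_ : n ≤ 2 ^ A),
            ENNReal.ofReal
              |(2 ^ A : ℝ)⁻¹ * ∑ k ∈ Finset.range (2 ^ A), walsh k x.1 * walsh (k + n) x.2|
        ≤ ENNReal.ofReal (C * δ ^ A)) ∧
      ∀ t2 s : ℕ, t2 < s → ∀ m : ℕ, m < 2 ^ (t2 + 1) →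
        ∀ u : ℝ × ℝ, u ∈ Set.Ico (0 : ℝ) 1 ×ˢ Set.Ico (0 : ℝ) 1 →
          (2 : ENNReal) ^ (2 * t2) *
              ∫⁻ x in Idyadic (t2 + 1) u.1 ×ˢ Idyadic (t2 + 1) u.2, Ffun t2 s m x
            ≤ ENNReal.ofReal (C * 2 ^ (s - t2) * δ ^ (s - t2)) := by
  exact ⟨1 + Real.sqrt 2, by positivity, δc, δc_pos, δc_lt_one, clause1, clause2⟩
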